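/- Let m ≥ 2, let K ∈ ℝ^{m×m} be symmetric positive definite, η ∈ ℝ^m, fix j ∈ {1,…,m−1} and α > 0. For x ∈ Δ_{−m}° write x_m := 1 − Σ_{i=1}^{m−1} x_i, L(x) = (log x_1, …, log x_m), and define the log–log profiled score t_j(x) = −(κ_{·,j}^⊤ L(x))/x_j + (κ_{·,m}^⊤ L(x))/x_m + η_j/x_j − η_m/x_m. Then ∫_{Δ_{−m}°} exp(−(1/2) L(x)^⊤ K L(x) + η^⊤ L(x)) · min{x_j, x_m}^α · t_j(x)² dx < ∞. -/

import Mathlib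

open MeasureTheory Matrix Finset

/-- The open simplex `Δ_{-m}°` in `ℝ^n` (where `m = n+1`). -/
def simplexInt (n : ℕ) : Set (Fin n → ℝ) :=
  {x | (∀ i, 0 < x i) ∧ ∑ i, x i < 1}

/-- Profile the last coordinate: send `x ∈ ℝ^n` to `(x, 1 - ∑ x) ∈ ℝ^{n+1}`. -/
noncomputable def fullVec {n : ℕ} (x : Fin n → ℝ) : Fin (n + 1) → ℝ :=
  Fin.snoc x (1 - ∑ i, x i)

/-- Componentwise logarithm. -/
noncomputable def logVec {n : ℕ} (x : Fin n → ℝ) : Fin n → ℝ :=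
  fun i => Real.log (x i)

lemma posdef_quad_lower (N : ℕ) (K : Matrix (Fin (N+1)) (Fin (N+1)) ℝ) (hK : K.PosDef) :
    ∃ c : ℝ, 0 < c ∧ ∀ v : Fin (N+1) → ℝ, c * ∑ i, v i ^ 2 ≤ v ⬝ᵥ K.mulVec v := by
  set f : (Fin (N+1) → ℝ) → ℝ := fun v => v ⬝ᵥ K.mulVec v with hf
  have hfc : Continuous f := by
    have : f = fun v => ∑ i, v i * ∑ k, K i k * v k := by
      funext v; simp [hf, dotProduct, Matrix.mulVec]
    rw [this]
    exact continuous_finset_sum _ fun i _ => (continuous_apply i).mul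
      (continuous_finset_sum _ fun k _ => continuous_const.mul (continuous_apply k))
  set Sph : Set (Fin (N+1) → ℝ) := {v | ∑ i, v i ^ 2 = 1} with hSph
  have hclosed : IsClosed Sph :=
    isClosed_eq (continuous_finset_sum _ fun i _ => (continuous_apply i).pow 2) continuous_const
  have hbdd : Bornology.IsBounded Sph := by
    apply (Metric.isBounded_closedBall (x := (0 : Fin (N+1) → ℝ)) (r := 1)).subset
    intro v hv
    simp only [Metric.mem_closedBall, dist_zero_right]
    refine (pi_norm_le_iff_of_nonneg zero_le_one).mpr fun i => ?_
    have h1 : v i ^ 2 ≤ 1 := hv ▸ Finset.single_le_sum (fun k _ => sq_nonneg (v k)) (mem_univ i)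
    rw [Real.norm_eq_abs]
    nlinarith [abs_nonneg (v i), sq_abs (v i)]
  have hcomp : IsCompact Sph := Metric.isCompact_of_isClosed_isBounded hclosed hbdd
  have hne : Sph.Nonempty := by
    refine ⟨fun i => if i = 0 then 1 else 0, ?_⟩
    simp [hSph, Set.mem_setOf_eq, apply_ite (· ^ (2:ℕ))]
  obtain ⟨v0, hv0S, hmin⟩ := hcomp.exists_isMinOn hne hfc.continuousOn
  have hv0ne : v0 ≠ 0 := by
    intro h
    rw [hSph] at hv0S
    simp [h] at hv0S
  have hc : 0 < f v0 := by
    have := hK.dotProduct_mulVec_pos hv0ne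
    simpa [hf] using this
  refine ⟨f v0, hc, fun v => ?_⟩
  by_cases hv : v = 0
  · simp [hv, hf]
  · set r := Real.sqrt (∑ i, v i ^ 2) with hr
    have hsumpos : 0 < ∑ i, v i ^ 2 := by
      obtain ⟨i, hi⟩ := Function.ne_iff.mp hv
      exact Finset.sum_pos' (fun k _ => sq_nonneg _) ⟨i, mem_univ i, by simpa using pow_pos (abs_pos.mpr hi) 2 |>.trans_eq (sq_abs _)⟩
    have hrpos : 0 < r := Real.sqrt_pos.mpr hsumpos
    have hr2 : r ^ 2 = ∑ i, v i ^ 2 := Real.sq_sqrt hsumpos.le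
    have hw : (r⁻¹ • v) ∈ Sph := by
      rw [hSph]
      simp only [Set.mem_setOf_eq, Pi.smul_apply, smul_eq_mul, mul_pow, ← Finset.mul_sum]
      rw [← hr2]
      field_simp
    have hle : f v0 ≤ f (r⁻¹ • v) := hmin hw
    have hscale : f (r⁻¹ • v) = r⁻¹ * (r⁻¹ * f v) := by
      simp [hf, Matrix.mulVec_smul, dotProduct_smul, smul_dotProduct, smul_eq_mul, mul_assoc]
    rw [hscale] at hle
    calc f v0 * ∑ i, v i ^ 2 = f v0 * r ^ 2 := by rw [hr2]
      _ ≤ (r⁻¹ * (r⁻¹ * f v)) * r ^ 2 := by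
          apply mul_le_mul_of_nonneg_right hle (sq_nonneg r)
      _ = f v := by rw [sq]; have h := hrpos.ne'; field_simp

lemma fullVec_pos {n : ℕ} {x : Fin n → ℝ} (hx : x ∈ simplexInt n) (i : Fin (n+1)) :
    0 < fullVec x i := by
  refine Fin.lastCases ?_ ?_ i
  · simp only [fullVec, Fin.snoc_last]
    linarith [hx.2]
  · intro k
    simpa [fullVec] using hx.1 k

lemma fullVec_le_one {n : ℕ} {x : Fin n → ℝ} (hx : x ∈ simplexInt n) (i : Fin (n+1)) :
    fullVec x i ≤ 1 := by
  refine Fin.lastCases ?_ ?_ i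
  · simp only [fullVec, Fin.snoc_last]
    have : 0 ≤ ∑ i, x i := Finset.sum_nonneg fun k _ => (hx.1 k).le
    linarith
  · intro k
    simp only [fullVec, Fin.snoc_castSucc]
    have h1 : x k ≤ ∑ i, x i := Finset.single_le_sum (fun i _ => (hx.1 i).le) (mem_univ k)
    linarith [hx.2]

lemma sq_le_four_exp (y : ℝ) (hy : 0 ≤ y) : y ^ 2 ≤ 4 * Real.exp y := by
  have h : Real.exp y = Real.exp (y/2) * Real.exp (y/2) := by
    rw [← Real.exp_add]; ring_nf
  nlinarith [Real.add_one_le_exp (y/2), Real.exp_nonneg (y/2)]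

lemma pointwise_bound (n : ℕ) (K : Matrix (Fin (n+1)) (Fin (n+1)) ℝ)
    (η : Fin (n+1) → ℝ) (j : Fin n) (α : ℝ) (hα : 0 < α)
    (c : ℝ) (hc : 0 < c)
    (hcK : ∀ v : Fin (n+1) → ℝ, c * ∑ i, v i ^ 2 ≤ v ⬝ᵥ K.mulVec v)
    (x : Fin n → ℝ) (hx : x ∈ simplexInt n) :
    Real.exp (-(1 / 2) * (logVec (fullVec x) ⬝ᵥ K.mulVec (logVec (fullVec x)))
        + η ⬝ᵥ logVec (fullVec x)) *
      min (fullVec x j.castSucc) (fullVec x (Fin.last n)) ^ α *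
      (-(∑ i, K i j.castSucc * Real.log (fullVec x i)) / fullVec x j.castSucc
        + (∑ i, K i (Fin.last n) * Real.log (fullVec x i)) / fullVec x (Fin.last n)
        + η j.castSucc / fullVec x j.castSucc
        - η (Fin.last n) / fullVec x (Fin.last n)) ^ 2 ≤
    4 * Real.exp ((|η j.castSucc| + |η (Fin.last n)|) +
      ((∑ i, |η i|) + ((∑ i, |K i j.castSucc|) + (∑ i, |K i (Fin.last n)|)) + 2)^2 / (2*c)) := by
  have hpos : ∀ i, 0 < fullVec x i := fullVec_pos hx
  have hle1 : ∀ i, fullVec x i ≤ 1 := fullVec_le_one hx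
  set S := ∑ i, Real.log (fullVec x i) ^ 2 with hS
  set u := Real.sqrt S with hu
  clear_value u
  have hS0 : 0 ≤ S := Finset.sum_nonneg fun i _ => sq_nonneg _
  have hu0 : 0 ≤ u := hu ▸ Real.sqrt_nonneg _
  have hu2 : u ^ 2 = S := by rw [hu]; exact Real.sq_sqrt hS0
  have hLu : ∀ i, |Real.log (fullVec x i)| ≤ u := by
    intro i
    rw [hu, ← Real.sqrt_sq_eq_abs]
    exact Real.sqrt_le_sqrt
      (hS ▸ Finset.single_le_sum (fun k _ => sq_nonneg (Real.log (fullVec x k))) (mem_univ i))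
  have hinv : ∀ i, (fullVec x i)⁻¹ ≤ Real.exp u := by
    intro i
    rw [← Real.exp_log (hpos i), ← Real.exp_neg]
    exact Real.exp_le_exp.mpr ((neg_le_abs _).trans (hLu i))
  have habs : ∀ w : Fin (n+1) → ℝ,
      |∑ i, w i * Real.log (fullVec x i)| ≤ (∑ i, |w i|) * u := by
    intro w
    calc |∑ i, w i * Real.log (fullVec x i)|
        ≤ ∑ i, |w i * Real.log (fullVec x i)| := Finset.abs_sum_le_sum_abs _ _
      _ ≤ ∑ i, |w i| * u := Finset.sum_le_sum fun i _ => by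
          rw [abs_mul]; exact mul_le_mul_of_nonneg_left (hLu i) (abs_nonneg _)
      _ = (∑ i, |w i|) * u := by rw [← Finset.sum_mul]
  set E := ∑ i, |η i| with hE
  set Aj := ∑ i, |K i j.castSucc| with hAj
  set Am := ∑ i, |K i (Fin.last n)| with hAm
  have hE0 : 0 ≤ E := Finset.sum_nonneg fun i _ => abs_nonneg _
  have hAj0 : 0 ≤ Aj := Finset.sum_nonneg fun i _ => abs_nonneg _
  have hAm0 : 0 ≤ Am := Finset.sum_nonneg fun i _ => abs_nonneg _
  set B := |η j.castSucc| + |η (Fin.last n)| with hB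
  clear_value E Aj Am B
  have hB0 : 0 ≤ B := by rw [hB]; positivity
  -- quadratic form bound
  have hquad : c * S ≤ logVec (fullVec x) ⬝ᵥ K.mulVec (logVec (fullVec x)) := by
    have h := hcK (logVec (fullVec x))
    rw [hS]
    simpa [logVec] using h
  have hηdot : η ⬝ᵥ logVec (fullVec x) ≤ E * u := by
    have h2 : η ⬝ᵥ logVec (fullVec x) = ∑ i, η i * Real.log (fullVec x i) := by
      simp [dotProduct, logVec]
    rw [h2, hE]
    exact (le_abs_self _).trans (habs η)
  have hexp : Real.exp (-(1 / 2) * (logVec (fullVec x) ⬝ᵥ K.mulVec (logVec (fullVec x)))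
        + η ⬝ᵥ logVec (fullVec x)) ≤ Real.exp (-(c/2)*u^2 + E*u) := by
    apply Real.exp_le_exp.mpr
    rw [hu2]
    nlinarith [hquad, hηdot]
  have hminle : min (fullVec x j.castSucc) (fullVec x (Fin.last n)) ^ α ≤ 1 :=
    Real.rpow_le_one (le_min (hpos _).le (hpos _).le)
      ((min_le_left _ _).trans (hle1 _)) hα.le
  have hmin0 : 0 ≤ min (fullVec x j.castSucc) (fullVec x (Fin.last n)) ^ α :=
    Real.rpow_nonneg (le_min (hpos _).le (hpos _).le) α
  -- score bound
  set T := -(∑ i, K i j.castSucc * Real.log (fullVec x i)) / fullVec x j.castSucc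
        + (∑ i, K i (Fin.last n) * Real.log (fullVec x i)) / fullVec x (Fin.last n)
        + η j.castSucc / fullVec x j.castSucc
        - η (Fin.last n) / fullVec x (Fin.last n) with hT
  have htabs : |T| ≤ ((Aj + Am) * u + B) * Real.exp u := by
    have hSj : |∑ i, K i j.castSucc * Real.log (fullVec x i)| ≤ Aj * u := by
      rw [hAj]; exact habs _
    have hSm : |∑ i, K i (Fin.last n) * Real.log (fullVec x i)| ≤ Am * u := by
      rw [hAm]; exact habs _
    set a := (∑ i, K i j.castSucc * Real.log (fullVec x i)) / fullVec x j.castSucc with ha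
    set b := (∑ i, K i (Fin.last n) * Real.log (fullVec x i)) / fullVec x (Fin.last n) with hb
    set e := η j.castSucc / fullVec x j.castSucc with he
    set d := η (Fin.last n) / fullVec x (Fin.last n) with hd
    have hTeq : T = -a + b + e - d := by rw [hT, ha, hb, he, hd]; ring
    have h1 : |T| ≤ |a| + |b| + |e| + |d| := by
      rw [hTeq]
      calc |-a + b + e - d| ≤ |-a + b + e| + |d| := abs_sub _ _
        _ ≤ |-a + b| + |e| + |d| := by linarith [abs_add_le (-a + b) e]
        _ ≤ |a| + |b| + |e| + |d| := by
            have := abs_add_le (-a) b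
            rw [abs_neg] at this
            linarith
    have h2 : |a| ≤ Aj * u * Real.exp u := by
      rw [ha, abs_div, abs_of_pos (hpos _), div_eq_mul_inv]
      exact mul_le_mul hSj (hinv _) (inv_nonneg.mpr (hpos _).le) (by positivity)
    have h3 : |b| ≤ Am * u * Real.exp u := by
      rw [hb, abs_div, abs_of_pos (hpos _), div_eq_mul_inv]
      exact mul_le_mul hSm (hinv _) (inv_nonneg.mpr (hpos _).le) (by positivity)
    have h4 : |e| ≤ |η j.castSucc| * Real.exp u := by
      rw [he, abs_div, abs_of_pos (hpos _), div_eq_mul_inv]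
      exact mul_le_mul_of_nonneg_left (hinv _) (abs_nonneg _)
    have h5 : |d| ≤ |η (Fin.last n)| * Real.exp u := by
      rw [hd, abs_div, abs_of_pos (hpos _), div_eq_mul_inv]
      exact mul_le_mul_of_nonneg_left (hinv _) (abs_nonneg _)
    have hre : ((Aj + Am) * u + B) * Real.exp u
        = Aj * u * Real.exp u + Am * u * Real.exp u
          + (|η j.castSucc| * Real.exp u + |η (Fin.last n)| * Real.exp u) := by
      rw [hB]; ring
    rw [hre]
    linarith [h1, h2, h3, h4, h5]
  have ht2 : T ^ 2 ≤ 4 * Real.exp ((Aj + Am) * u + B) * (Real.exp u * Real.exp u) := by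
    have hy : (0:ℝ) ≤ (Aj + Am) * u + B := by positivity
    have h4e := sq_le_four_exp ((Aj + Am) * u + B) hy
    calc T ^ 2 = |T| ^ 2 := (sq_abs T).symm
      _ ≤ (((Aj + Am) * u + B) * Real.exp u) ^ 2 := by
          exact pow_le_pow_left₀ (abs_nonneg _) htabs 2
      _ = ((Aj + Am) * u + B) ^ 2 * (Real.exp u * Real.exp u) := by ring
      _ ≤ 4 * Real.exp ((Aj + Am) * u + B) * (Real.exp u * Real.exp u) := by
          exact mul_le_mul_of_nonneg_right h4e (by positivity)
  calc Real.exp (-(1 / 2) * (logVec (fullVec x) ⬝ᵥ K.mulVec (logVec (fullVec x)))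
        + η ⬝ᵥ logVec (fullVec x)) *
      min (fullVec x j.castSucc) (fullVec x (Fin.last n)) ^ α * T ^ 2
      ≤ (Real.exp (-(c/2)*u^2 + E*u) * 1) *
        (4 * Real.exp ((Aj + Am) * u + B) * (Real.exp u * Real.exp u)) := by
        apply mul_le_mul _ ht2 (sq_nonneg T) (by positivity)
        exact mul_le_mul hexp hminle hmin0 (Real.exp_nonneg _)
    _ = 4 * Real.exp ((-(c/2)*u^2 + E*u) + ((Aj + Am) * u + B) + u + u) := by
        simp only [Real.exp_add]; ring
    _ ≤ 4 * Real.exp (B + (E + (Aj + Am) + 2)^2 / (2*c)) := by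
        have h2c : (0:ℝ) < 2*c := by linarith
        have key : E*u + (Aj+Am)*u + u + u - (c/2)*u^2 ≤ (E + (Aj + Am) + 2)^2 / (2*c) := by
          rw [le_div_iff₀ h2c]
          nlinarith [sq_nonneg (c*u - (E + (Aj + Am) + 2))]
        exact mul_le_mul_of_nonneg_left (Real.exp_le_exp.mpr (by linarith)) (by norm_num)

lemma continuous_fullVec_apply {n : ℕ} (i : Fin (n+1)) :
    Continuous fun y : Fin n → ℝ => fullVec y i := by
  refine Fin.lastCases ?_ ?_ i
  · simp only [fullVec, Fin.snoc_last]
    exact continuous_const.sub (continuous_finset_sum _ fun k _ => continuous_apply k)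
  · intro k
    simp only [fullVec, Fin.snoc_castSucc]
    exact continuous_apply k


section Main
variable (n : ℕ) (K : Matrix (Fin (n + 1)) (Fin (n + 1)) ℝ) (η : Fin (n + 1) → ℝ)
  (j : Fin n) (α : ℝ)

lemma integrand_continuousOn (hα : 0 < α) :
    ContinuousOn (fun x : Fin n → ℝ =>
      Real.exp (-(1 / 2) * (logVec (fullVec x) ⬝ᵥ K.mulVec (logVec (fullVec x)))
        + η ⬝ᵥ logVec (fullVec x)) *
      min (fullVec x j.castSucc) (fullVec x (Fin.last n)) ^ α *
      (-(∑ i, K i j.castSucc * Real.log (fullVec x i)) / fullVec x j.castSucc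
        + (∑ i, K i (Fin.last n) * Real.log (fullVec x i)) / fullVec x (Fin.last n)
        + η j.castSucc / fullVec x j.castSucc
        - η (Fin.last n) / fullVec x (Fin.last n)) ^ 2) (simplexInt n) := by
  have hne : ∀ i : Fin (n+1), ∀ x ∈ simplexInt n, fullVec x i ≠ 0 :=
    fun i x hx => (fullVec_pos hx i).ne'
  have hclog : ∀ i : Fin (n+1),
      ContinuousOn (fun y : Fin n → ℝ => Real.log (fullVec y i)) (simplexInt n) :=
    fun i => ContinuousOn.log (continuous_fullVec_apply i).continuousOn (hne i)
  have hsum : ∀ w : Fin (n+1) → ℝ,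
      ContinuousOn (fun y : Fin n → ℝ => ∑ i, w i * Real.log (fullVec y i)) (simplexInt n) :=
    fun w => continuousOn_finset_sum _ fun i _ => continuousOn_const.mul (hclog i)
  have hquad : ContinuousOn (fun y : Fin n → ℝ =>
      logVec (fullVec y) ⬝ᵥ K.mulVec (logVec (fullVec y))) (simplexInt n) := by
    have heq : (fun y : Fin n → ℝ => logVec (fullVec y) ⬝ᵥ K.mulVec (logVec (fullVec y)))
        = fun y => ∑ i, Real.log (fullVec y i) * ∑ k, K i k * Real.log (fullVec y k) := by
      funext y; simp [dotProduct, Matrix.mulVec, logVec]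
    rw [heq]
    exact continuousOn_finset_sum _ fun i _ => (hclog i).mul
      (continuousOn_finset_sum _ fun k _ => continuousOn_const.mul (hclog k))
  have hηdot : ContinuousOn (fun y : Fin n → ℝ => η ⬝ᵥ logVec (fullVec y)) (simplexInt n) := by
    have heq : (fun y : Fin n → ℝ => η ⬝ᵥ logVec (fullVec y))
        = fun y => ∑ i, η i * Real.log (fullVec y i) := by
      funext y; simp [dotProduct, logVec]
    rw [heq]; exact hsum η
  have h1 : ContinuousOn (fun y : Fin n → ℝ =>
      Real.exp (-(1 / 2) * (logVec (fullVec y) ⬝ᵥ K.mulVec (logVec (fullVec y)))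
        + η ⬝ᵥ logVec (fullVec y))) (simplexInt n) :=
    Real.continuous_exp.comp_continuousOn ((continuousOn_const.mul hquad).add hηdot)
  have h2 : ContinuousOn (fun y : Fin n → ℝ =>
      min (fullVec y j.castSucc) (fullVec y (Fin.last n)) ^ α) (simplexInt n) :=
    ContinuousOn.rpow_const
      (((continuous_fullVec_apply j.castSucc).min
        (continuous_fullVec_apply (Fin.last n))).continuousOn)
      (fun x _ => Or.inr hα.le)
  have h3 : ContinuousOn (fun y : Fin n → ℝ =>
      (-(∑ i, K i j.castSucc * Real.log (fullVec y i)) / fullVec y j.castSucc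
        + (∑ i, K i (Fin.last n) * Real.log (fullVec y i)) / fullVec y (Fin.last n)
        + η j.castSucc / fullVec y j.castSucc
        - η (Fin.last n) / fullVec y (Fin.last n)) ^ 2) (simplexInt n) := by
    apply ContinuousOn.pow
    apply ContinuousOn.sub
    apply ContinuousOn.add
    apply ContinuousOn.add
    · exact ((hsum _).neg).div (continuous_fullVec_apply _).continuousOn (hne _)
    · exact (hsum _).div (continuous_fullVec_apply _).continuousOn (hne _)
    · exact continuousOn_const.div (continuous_fullVec_apply _).continuousOn (hne _)
    · exact continuousOn_const.div (continuous_fullVec_apply _).continuousOn (hne _)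
  exact (h1.mul h2).mul h3

end Main

set_option maxHeartbeats 1000000 in
/-- Weighted integrability of the squared log–log profiled score against the log–log
kernel, for symmetric positive definite `K` and weight exponent `α > 0`. -/
theorem loglog_weighted_score_square_integrable (n : ℕ) (hn : 1 ≤ n)
    (K : Matrix (Fin (n + 1)) (Fin (n + 1)) ℝ) (hK : K.IsSymm) (hKpd : K.PosDef)
    (η : Fin (n + 1) → ℝ) (j : Fin n) (α : ℝ) (hα : 0 < α) :
    IntegrableOn (fun x : Fin n → ℝ =>
      Real.exp (-(1 / 2) * (logVec (fullVec x) ⬝ᵥ K.mulVec (logVec (fullVec x)))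
        + η ⬝ᵥ logVec (fullVec x)) *
      min (fullVec x j.castSucc) (fullVec x (Fin.last n)) ^ α *
      (-(∑ i, K i j.castSucc * Real.log (fullVec x i)) / fullVec x j.castSucc
        + (∑ i, K i (Fin.last n) * Real.log (fullVec x i)) / fullVec x (Fin.last n)
        + η j.castSucc / fullVec x j.castSucc
        - η (Fin.last n) / fullVec x (Fin.last n)) ^ 2) (simplexInt n) := by
  obtain ⟨c, hc, hcK⟩ := posdef_quad_lower n K hKpd
  have hopen : IsOpen (simplexInt n) := by
    have h1 : IsOpen {x : Fin n → ℝ | ∀ i, 0 < x i} := by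
      rw [Set.setOf_forall]
      exact isOpen_iInter_of_finite fun i => isOpen_lt continuous_const (continuous_apply i)
    have h2 : IsOpen {x : Fin n → ℝ | ∑ i, x i < 1} :=
      isOpen_lt (continuous_finset_sum _ fun i _ => continuous_apply i) continuous_const
    rw [simplexInt, Set.setOf_and]
    exact h1.inter h2
  have hmeas : MeasurableSet (simplexInt n) := hopen.measurableSet
  have hvol : volume (simplexInt n) < ⊤ := by
    have hsub : simplexInt n ⊆ Set.pi Set.univ (fun _ : Fin n => Set.Ioo (0:ℝ) 1) := by
      intro x hx i _
      exact ⟨hx.1 i,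
        lt_of_le_of_lt (Finset.single_le_sum (fun k _ => (hx.1 k).le) (mem_univ i)) hx.2⟩
    have hv : volume (Set.pi Set.univ (fun _ : Fin n => Set.Ioo (0:ℝ) 1)) = 1 := by
      rw [volume_pi_pi]; simp
    calc volume (simplexInt n) ≤ 1 := hv ▸ measure_mono hsub
      _ < ⊤ := ENNReal.one_lt_top
  refine ⟨(integrand_continuousOn n K η j α hα).aestronglyMeasurable hmeas, ?_⟩
  apply HasFiniteIntegral.restrict_of_bounded
    (C := 4 * Real.exp ((|η j.castSucc| + |η (Fin.last n)|) +
      ((∑ i, |η i|) + ((∑ i, |K i j.castSucc|) + (∑ i, |K i (Fin.last n)|)) + 2)^2 / (2*c)))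
    hvol
  rw [ae_restrict_iff' hmeas]
  refine ae_of_all _ fun x hx => ?_
  have h0 : (0:ℝ) ≤ Real.exp (-(1 / 2) * (logVec (fullVec x) ⬝ᵥ K.mulVec (logVec (fullVec x)))
        + η ⬝ᵥ logVec (fullVec x)) *
      min (fullVec x j.castSucc) (fullVec x (Fin.last n)) ^ α *
      (-(∑ i, K i j.castSucc * Real.log (fullVec x i)) / fullVec x j.castSucc
        + (∑ i, K i (Fin.last n) * Real.log (fullVec x i)) / fullVec x (Fin.last n)
        + η j.castSucc / fullVec x j.castSucc
        - η (Fin.last n) / fullVec x (Fin.last n)) ^ 2 :=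
    mul_nonneg (mul_nonneg (Real.exp_nonneg _)
      (Real.rpow_nonneg (le_min (fullVec_pos hx _).le (fullVec_pos hx _).le) _)) (sq_nonneg _)
  rw [Real.norm_eq_abs, abs_of_nonneg h0]
  exact pointwise_bound n K η j α hα c hc hcK x hx
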